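/- The function F^L(x) = x − Σ_{j=1}^{L} 2^{−2j} G^j(x), with G(x) = min{2x, 2(1−x)}, is convex on [0,1]. -/

import Mathlib

/-- The tooth function `G(x) = min (2x) (2(1-x))`. -/
noncomputable def sawG (x : ℝ) : ℝ := min (2 * x) (2 * (1 - x))

/-- The sawtooth approximation `F^L(x) = x - ∑_{j=1}^L 2^{-2j} G^j(x)`. -/
noncomputable def sawF (L : ℕ) (x : ℝ) : ℝ :=
  x - ∑ j ∈ Finset.Icc 1 L, (2 : ℝ) ^ (-(2 * (j : ℤ))) * sawG^[j] x

lemma sawG_symm (t : ℝ) : sawG (1 - t) = sawG t := by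
  unfold sawG
  rw [min_comm]
  ring_nf

lemma sawG_mem {x : ℝ} (hx : x ∈ Set.Icc (0:ℝ) 1) : sawG x ∈ Set.Icc (0:ℝ) 1 := by
  obtain ⟨h0, h1⟩ := hx
  unfold sawG
  constructor
  · exact le_min (by linarith) (by linarith)
  · rcases le_total x (1/2) with h | h
    · rw [min_eq_left (by linarith)]; linarith
    · rw [min_eq_right (by linarith)]; linarith

/-- key real inequality: for any `u`, `u(u-1) + fract u (1 - fract u) ≥ 0`. -/
lemma fract_aux (u : ℝ) : 0 ≤ u * (u - 1) + Int.fract u * (1 - Int.fract u) := by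
  have hu : u = (⌊u⌋ : ℝ) + Int.fract u := (Int.floor_add_fract u).symm
  have ht0 : (0:ℝ) ≤ Int.fract u := Int.fract_nonneg u
  have ht1 : Int.fract u < 1 := Int.fract_lt_one u
  rcases le_or_gt ⌊u⌋ (-1) with h | h
  · have h' : ((⌊u⌋ : ℤ) : ℝ) ≤ -1 := by exact_mod_cast h
    nlinarith [mul_nonneg (by linarith : (0:ℝ) ≤ -((⌊u⌋:ℤ):ℝ))
      (by linarith : (0:ℝ) ≤ -(((⌊u⌋:ℤ):ℝ) - 1 + 2 * Int.fract u))]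
  · rcases le_or_gt 1 ⌊u⌋ with h2 | h2
    · have h' : (1:ℝ) ≤ ((⌊u⌋ : ℤ) : ℝ) := by exact_mod_cast h2
      nlinarith [mul_nonneg (by linarith : (0:ℝ) ≤ ((⌊u⌋:ℤ):ℝ))
        (by linarith : (0:ℝ) ≤ ((⌊u⌋:ℤ):ℝ) - 1 + 2 * Int.fract u)]
    · have h3 : ⌊u⌋ = 0 := by omega
      have h' : ((⌊u⌋ : ℤ) : ℝ) = 0 := by exact_mod_cast h3
      nlinarith

/-- iterates of the tooth function via fractional parts. -/
lemma sawG_iterate (j : ℕ) : ∀ x ∈ Set.Icc (0:ℝ) 1,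
    sawG^[j+1] x = sawG (Int.fract ((2:ℝ)^j * x)) := by
  induction j with
  | zero =>
    intro x hx
    obtain ⟨h0, h1⟩ := hx
    have hit : sawG^[0+1] x = sawG x := by norm_num
    rw [hit, pow_zero, one_mul]
    rcases lt_or_eq_of_le h1 with h | h
    · rw [Int.fract_eq_self.mpr ⟨h0, h⟩]
    · subst h
      norm_num [sawG]
  | succ j ih =>
    intro x hx
    obtain ⟨h0, h1⟩ := hx
    rw [Function.iterate_succ_apply, ih (sawG x) (sawG_mem ⟨h0, h1⟩)]
    rcases le_total x (1/2) with h | h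
    · have hg : sawG x = 2 * x := min_eq_left (by linarith)
      rw [hg]
      congr 2
      ring
    · have hg : sawG x = 2 * (1 - x) := min_eq_right (by linarith)
      rw [hg]
      have h2 : (2:ℝ)^j * (2 * (1 - x)) = ((2^(j+1) : ℤ) : ℝ) + -((2:ℝ)^(j+1) * x) := by
        push_cast
        ring
      rw [h2, Int.fract_intCast_add]
      by_cases hz : Int.fract ((2:ℝ)^(j+1) * x) = 0
      · rw [Int.fract_neg_eq_zero.mpr hz, hz]
      · rw [Int.fract_neg hz, sawG_symm]

/-- the tooth function of a fractional part, in terms of the doubled angle. -/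
lemma sawG_fract {t : ℝ} (h0 : 0 ≤ t) (h1 : t < 1) :
    sawG t = 4 * (t * (1 - t)) - Int.fract (2 * t) * (1 - Int.fract (2 * t)) := by
  rcases lt_or_ge t (1/2) with h | h
  · have hf : Int.fract (2 * t) = 2 * t := Int.fract_eq_self.mpr ⟨by linarith, by linarith⟩
    have hg : sawG t = 2 * t := min_eq_left (by simp [sawG]; linarith)
    rw [hf]
    unfold sawG
    rw [min_eq_left (by linarith)]
    ring
  · have hf : Int.fract (2 * t) = 2 * t - 1 := by
      have : (2 : ℝ) * t = (2 * t - 1) + ((1:ℤ) : ℝ) := by push_cast; ring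
      rw [this, Int.fract_add_intCast, Int.fract_eq_self.mpr ⟨by linarith, by linarith⟩]
      push_cast
      ring
    rw [hf]
    unfold sawG
    rw [min_eq_right (by linarith)]
    ring

lemma fract_two_mul (y : ℝ) : Int.fract (2 * Int.fract y) = Int.fract (2 * y) := by
  have : 2 * Int.fract y = 2 * y - ((2 * ⌊y⌋ : ℤ) : ℝ) := by
    rw [Int.fract]
    push_cast
    ring
  rw [this, Int.fract_sub_intCast]

lemma two_zpow_neg_two (j : ℕ) : (2 : ℝ) ^ (-(2 * (j : ℤ))) = ((4:ℝ)^j)⁻¹ := by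
  rw [zpow_neg]
  congr 1
  rw [show (2 * (j:ℤ)) = ((2 * j : ℕ) : ℤ) by push_cast; ring, zpow_natCast,
    pow_mul]
  norm_num

/-- the closed formula for `sawF` on `[0,1]`. -/
lemma sawF_formula (L : ℕ) : ∀ x ∈ Set.Icc (0:ℝ) 1,
    sawF L x = x^2 + Int.fract ((2:ℝ)^L * x) * (1 - Int.fract ((2:ℝ)^L * x)) / 4^L := by
  induction L with
  | zero =>
    intro x hx
    obtain ⟨h0, h1⟩ := hx
    simp only [sawF, Finset.Icc_self, pow_zero, one_mul]
    rw [Finset.Icc_eq_empty (by norm_num : ¬ (1:ℕ) ≤ 0), Finset.sum_empty]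
    rcases lt_or_eq_of_le h1 with h | h
    · rw [Int.fract_eq_self.mpr ⟨h0, h⟩]
      ring
    · subst h
      norm_num
  | succ L ih =>
    intro x hx
    have hstep : sawF (L+1) x = sawF L x - ((4:ℝ)^(L+1))⁻¹ * sawG^[L+1] x := by
      unfold sawF
      rw [Finset.sum_Icc_succ_top (by omega : 1 ≤ L + 1), two_zpow_neg_two]
      norm_num
      ring
    set t := Int.fract ((2:ℝ)^L * x) with ht
    have ht0 : 0 ≤ t := Int.fract_nonneg _
    have ht1 : t < 1 := Int.fract_lt_one _
    have hfs : Int.fract (2 * t) = Int.fract ((2:ℝ)^(L+1) * x) := by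
      rw [ht, fract_two_mul]
      congr 1
      ring
    rw [hstep, ih x hx, sawG_iterate L x hx, ← ht, sawG_fract ht0 ht1, hfs]
    have h4 : (0:ℝ) < 4^L := by positivity
    field_simp
    ring

/-- The function `F^L` is convex on the interval `[0, 1]`. -/
theorem sawF_convexOn (L : ℕ) : ConvexOn ℝ (Set.Icc (0 : ℝ) 1) (sawF L) := by
  refine ⟨convex_Icc 0 1, ?_⟩
  intro x hx y hy a b ha hb hab
  simp only [smul_eq_mul]
  set z := a * x + b * y with hz
  have hzmem : z ∈ Set.Icc (0:ℝ) 1 := by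
    have := (convex_Icc (0:ℝ) 1) hx hy ha hb hab
    simpa using this
  set k : ℤ := ⌊(2:ℝ)^L * z⌋ with hk
  set p : ℝ := 2^L with hp
  have hp0 : (0:ℝ) < p := by positivity
  have hpp : p * p = 4^L := by
    rw [hp, ← pow_add, show L + L = 2 * L by ring, pow_mul]
    norm_num
  -- the chord line
  set ℓ : ℝ → ℝ := fun w => ((2 * (k:ℝ) + 1) * w - ((k:ℝ) * ((k:ℝ) + 1)) / p) / p with hℓ
  -- chord lies below sawF on [0,1]
  have chord_le : ∀ w ∈ Set.Icc (0:ℝ) 1, ℓ w ≤ sawF L w := by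
    intro w hw
    rw [sawF_formula L w hw]
    have hfr : Int.fract (p * w - (k:ℝ)) = Int.fract ((2:ℝ)^L * w) := by
      rw [← hp]
      exact Int.fract_sub_intCast _ _
    have haux := fract_aux (p * w - (k:ℝ))
    rw [hfr] at haux
    set s := Int.fract ((2:ℝ)^L * w) with hs
    rw [hℓ, ← hpp]
    rw [div_le_iff₀ hp0, ← sub_nonneg]
    have key : (w ^ 2 + s * (1 - s) / (p * p)) * p - ((2 * (k:ℝ) + 1) * w - (k:ℝ) * ((k:ℝ) + 1) / p)
        = ((p * w - (k:ℝ)) * ((p * w - (k:ℝ)) - 1) + s * (1 - s)) / p := by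
      field_simp
      ring
    rw [key]
    positivity
  -- equality at z
  have heq : sawF L z = ℓ z := by
    rw [sawF_formula L z hzmem]
    have hfz : Int.fract ((2:ℝ)^L * z) = p * z - (k:ℝ) := by
      rw [← hp, Int.fract, hk, hp]
    rw [hfz, hℓ, ← hpp]
    field_simp
    ring
  -- affinity of the chord
  have haff : ℓ z = a * ℓ x + b * ℓ y := by
    have hb' : b = 1 - a := by linarith
    rw [hℓ, hz, hb']
    field_simp
    ring
  rw [heq, haff]
  have h1 : a * ℓ x ≤ a * sawF L x := mul_le_mul_of_nonneg_left (chord_le x hx) ha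
  have h2 : b * ℓ y ≤ b * sawF L y := mul_le_mul_of_nonneg_left (chord_le y hy) hb
  linarith
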